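/- Every non-negative integer n can be written uniquely in the canonical greedy way as n = Σ_i e_i S_i with e_i ∈ {0,1}, where e_i = 1 iff i = max{ j : S_j ≤ n − Σ_{k>i} e_k S_k }; moreover this greedy representation satisfies: e_i = 1 implies e_j = 0 for all Q(i+1) ≤ j < i. -/

import Mathlib

/-- The tail sum `Σ_{k > i} e_k S_k` of a digit sequence. -/
noncomputable def tailSum (S e : ℕ → ℕ) (i : ℕ) : ℕ := ∑' k : ℕ, if i < k then e k * S k else 0

/-- `e` is the canonical greedy representation of `n` with respect to the base `(S_i)`:
the digits are `0` or `1`, finitely many are nonzero, `n = Σ_i e_i S_i`, and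
`e_i = 1` iff `i = max { j : S_j ≤ n − Σ_{k > i} e_k S_k }`. -/
noncomputable def IsGreedyRep (S : ℕ → ℕ) (n : ℕ) (e : ℕ → ℕ) : Prop :=
  (∀ i, e i ≤ 1) ∧ (∃ N, ∀ i, N ≤ i → e i = 0) ∧
  (n = ∑' i : ℕ, e i * S i) ∧
  (∀ i, (e i = 1 ↔ IsGreatest {j | S j ≤ n - tailSum S e i} i))

def greedySet (S : ℕ → ℕ) : ℕ → Finset ℕ
  | 0 => ∅
  | (n+1) =>
    insert (Nat.findGreatest (fun j => S j ≤ n + 1) (n + 1))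
      (greedySet S (n + 1 - max 1 (S (Nat.findGreatest (fun j => S j ≤ n + 1) (n + 1)))))
  decreasing_by exact Nat.sub_lt (Nat.succ_pos n) (lt_of_lt_of_le one_pos (le_max_left _ _))

lemma greedySet_succ (S : ℕ → ℕ) (n : ℕ) :
    greedySet S (n+1) = insert (Nat.findGreatest (fun j => S j ≤ n + 1) (n + 1))
      (greedySet S (n + 1 - max 1 (S (Nat.findGreatest (fun j => S j ≤ n + 1) (n + 1))))) := by
  rw [greedySet]

section aux
variable {S Q : ℕ → ℕ}

lemma lt_S (hS0 : S 0 = 1) (hmono : StrictMono S) : ∀ i, i < S i := by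
  intro i
  induction i with
  | zero => omega
  | succ k ih =>
    have h := hmono (Nat.lt_succ_self k)
    simp only [Nat.succ_eq_add_one] at *
    omega

lemma one_le_S (hS0 : S 0 = 1) (hmono : StrictMono S) (i : ℕ) : 1 ≤ S i :=
  hS0 ▸ hmono.monotone (Nat.zero_le i)

/-- An "admissible" finset with all elements below `M` has `S`-sum below `S M`. -/
lemma sum_lt_of_admissible (hS0 : S 0 = 1) (hmono : StrictMono S)
    (hrec : ∀ k, 1 ≤ k → S k = S (k - 1) + S (Q k)) :
    ∀ F : Finset ℕ, (∀ a ∈ F, ∀ b ∈ F, b < a → b < Q (a+1)) →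
      ∀ M, (∀ a ∈ F, a < M) → ∑ k ∈ F, S k < S M := by
  intro F
  induction F using Finset.strongInduction with
  | _ F ih =>
    intro hadm M hM
    rcases F.eq_empty_or_nonempty with rfl | hne
    · simpa using Nat.pos_of_ne_zero (Nat.one_le_iff_ne_zero.mp (one_le_S hS0 hmono M))
    · set a := F.max' hne with ha
      have haF : a ∈ F := F.max'_mem hne
      have hsum : ∑ k ∈ F.erase a, S k + S a = ∑ k ∈ F, S k := Finset.sum_erase_add F S haF
      have h1 : ∑ k ∈ F.erase a, S k < S (Q (a+1)) := by
        apply ih (F.erase a) (Finset.erase_ssubset haF)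
        · intro x hx y hy hxy
          exact hadm x (Finset.mem_of_mem_erase hx) y (Finset.mem_of_mem_erase hy) hxy
        · intro b hb
          have hbF := Finset.mem_of_mem_erase hb
          have hba : b < a := lt_of_le_of_ne (F.le_max' b hbF) (Finset.ne_of_mem_erase hb)
          exact hadm a haF b hbF hba
      have h2 : S (a+1) = S a + S (Q (a+1)) := by
        have := hrec (a+1) (by omega); simpa using this
      have h3 : S (a+1) ≤ S M := hmono.monotone (hM a haF)
      omega

lemma greedySet_spec (hS0 : S 0 = 1) (hmono : StrictMono S)
    (hQ : ∀ k, 1 ≤ k → Q k < k) (hrec : ∀ k, 1 ≤ k → S k = S (k - 1) + S (Q k)) :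
    ∀ n, (∑ k ∈ greedySet S n, S k = n) ∧ (∀ j ∈ greedySet S n, S j ≤ n) ∧
      (∀ i ∈ greedySet S n, ∀ j ∈ greedySet S n, j < i → j < Q (i+1)) := by
  intro n
  induction n using Nat.strong_induction_on with
  | _ n ih =>
    match n with
    | 0 => simp [greedySet]
    | (m+1) =>
      set i := Nat.findGreatest (fun j => S j ≤ m + 1) (m + 1) with hidef
      have hjle : ∀ j, S j ≤ m + 1 → j ≤ i := by
        intro j hj
        exact Nat.le_findGreatest (le_trans (le_of_lt (lt_S hS0 hmono j)) hj) hj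
      have hSi : S i ≤ m + 1 :=
        Nat.findGreatest_spec (P := fun j => S j ≤ m + 1) (Nat.zero_le _) (by omega)
      have hup : m + 1 < S (i+1) := by
        by_contra h
        have := hjle (i+1) (by omega)
        omega
      have hone : 1 ≤ S i := one_le_S hS0 hmono i
      have hmax : max 1 (S i) = S i := max_eq_right hone
      set n' := m + 1 - S i with hn'
      have hlt : n' < m + 1 := by omega
      obtain ⟨ha', hb', hc'⟩ := ih n' hlt
      have hGeq : greedySet S (m+1) = insert i (greedySet S n') := by
        rw [greedySet_succ]
        rw [← hidef, hmax]
      have hQi : Q (i+1) ≤ i := by have := hQ (i+1) (by omega); omega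
      have hSrec : S (i+1) = S i + S (Q (i+1)) := by
        have := hrec (i+1) (by omega); simpa using this
      have hsmall : ∀ j ∈ greedySet S n', j < Q (i+1) := by
        intro j hj
        have h1 : S j ≤ n' := hb' j hj
        have h2 : S j < S (Q (i+1)) := by omega
        exact hmono.lt_iff_lt.mp h2
      have hiG : i ∉ greedySet S n' := fun h => absurd (hsmall i h) (by omega)
      refine ⟨?_, ?_, ?_⟩
      · rw [hGeq, Finset.sum_insert hiG, ha']; omega
      · intro j hj
        rw [hGeq, Finset.mem_insert] at hj
        rcases hj with rfl | hj
        · exact hSi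
        · have := hb' j hj; omega
      · intro a haG b hbG hba
        rw [hGeq, Finset.mem_insert] at haG hbG
        rcases haG with rfl | haG
        · rcases hbG with rfl | hbG
          · omega
          · exact hsmall b hbG
        · have hai : a < Q (i+1) := hsmall a haG
          rcases hbG with rfl | hbG
          · omega
          · exact hc' a haG b hbG hba

end aux

section main
variable {S Q : ℕ → ℕ}

lemma greedy_isRep (hS0 : S 0 = 1) (hmono : StrictMono S)
    (hQ : ∀ k, 1 ≤ k → Q k < k) (hrec : ∀ k, 1 ≤ k → S k = S (k - 1) + S (Q k)) (n : ℕ) :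
    IsGreedyRep S n (fun i => if i ∈ greedySet S n then 1 else 0) := by
  obtain ⟨ha, hb, hc⟩ := greedySet_spec hS0 hmono hQ hrec n
  set e := fun i => if i ∈ greedySet S n then 1 else 0 with he
  have hbound : ∀ j ∈ greedySet S n, j < n := by
    intro j hj
    have h1 := lt_S hS0 hmono j
    have h2 := hb j hj
    omega
  have htail : ∀ i, tailSum S e i = ∑ k ∈ (greedySet S n).filter (fun k => i < k), S k := by
    intro i
    rw [tailSum, tsum_eq_sum (s := (greedySet S n).filter (fun k => i < k)) ?_]
    · apply Finset.sum_congr rfl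
      intro k hk
      rw [Finset.mem_filter] at hk
      simp [he, hk.1, hk.2]
    · intro b hb'
      rw [Finset.mem_filter] at hb'
      push_neg at hb'
      by_cases hib : i < b
      · have hbG : b ∉ greedySet S n := fun h => by have := hb' h; omega
        simp [he, hib, hbG]
      · simp [hib]
  have hr : ∀ i, n - tailSum S e i = ∑ k ∈ (greedySet S n).filter (fun k => ¬ i < k), S k := by
    intro i
    have hsp := Finset.sum_filter_add_sum_filter_not (greedySet S n) (fun k => i < k) S
    rw [htail i]
    omega
  have hadmF : ∀ i, ∀ a ∈ (greedySet S n).filter (fun k => ¬ i < k),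
      ∀ b ∈ (greedySet S n).filter (fun k => ¬ i < k), b < a → b < Q (a+1) := by
    intro i a haF b hbF hba
    rw [Finset.mem_filter] at haF hbF
    exact hc a haF.1 b hbF.1 hba
  refine ⟨?_, ⟨n + 1, ?_⟩, ?_, ?_⟩
  · intro i; simp only [he]; split <;> omega
  · intro i hi
    have : i ∉ greedySet S n := fun h => by have := hbound i h; omega
    simp [he, this]
  · rw [tsum_eq_sum (s := greedySet S n) ?_]
    · have hcong : ∑ b ∈ greedySet S n, e b * S b = ∑ b ∈ greedySet S n, S b :=
        Finset.sum_congr rfl (fun k hk => by simp [he, hk])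
      rw [hcong, ha]
    · intro b hbG
      simp [he, hbG]
  · intro i
    constructor
    · intro h1
      have hiG : i ∈ greedySet S n := by
        by_contra h; simp [he, h] at h1
      constructor
      · rw [hr]
        exact Finset.single_le_sum (f := S) (fun _ _ => Nat.zero_le _)
          (Finset.mem_filter.mpr ⟨hiG, by omega⟩)
      · intro j hj
        have hrlt : ∑ k ∈ (greedySet S n).filter (fun k => ¬ i < k), S k < S (i+1) := by
          apply sum_lt_of_admissible hS0 hmono hrec _ (hadmF i)
          intro a haF
          rw [Finset.mem_filter] at haF
          omega
        rw [Set.mem_setOf_eq, hr] at hj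
        have : S j < S (i+1) := by omega
        have := hmono.lt_iff_lt.mp this
        omega
    · intro hgreat
      have hiG : i ∈ greedySet S n := by
        by_contra h
        have hrlt : ∑ k ∈ (greedySet S n).filter (fun k => ¬ i < k), S k < S i := by
          apply sum_lt_of_admissible hS0 hmono hrec _ (hadmF i)
          intro a haF
          rw [Finset.mem_filter] at haF
          have : a ≠ i := fun hh => h (hh ▸ haF.1)
          omega
        have h1 := hgreat.1
        rw [Set.mem_setOf_eq, hr] at h1
        omega
      simp [he, hiG]

lemma greedy_unique {n : ℕ} {e f : ℕ → ℕ}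
    (he : IsGreedyRep S n e) (hf : IsGreedyRep S n f) : e = f := by
  obtain ⟨he1, ⟨Ne, hNe⟩, he3, he4⟩ := he
  obtain ⟨hf1, ⟨Nf, hNf⟩, hf3, hf4⟩ := hf
  set N := max Ne Nf with hN
  have key : ∀ d k, N ≤ k + d → e k = f k := by
    intro d
    induction d with
    | zero => intro k hk; rw [hNe k (by omega), hNf k (by omega)]
    | succ d ihd =>
      intro k hk
      by_cases hkN : N ≤ k
      · rw [hNe k (by omega), hNf k (by omega)]
      · have hhigh : ∀ l, k < l → e l = f l := fun l hl => ihd l (by omega)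
        have htl : tailSum S e k = tailSum S f k := by
          apply tsum_congr; intro l
          by_cases h : k < l
          · simp [h, hhigh l h]
          · simp [h]
        have h4 := he4 k
        have h4' := hf4 k
        rw [htl] at h4
        by_cases hP : IsGreatest {j | S j ≤ n - tailSum S f k} k
        · rw [h4.mpr hP, h4'.mpr hP]
        · have hee := he1 k
          have hff := hf1 k
          have e0 : e k ≠ 1 := fun h => hP (h4.mp h)
          have f0 : f k ≠ 1 := fun h => hP (h4'.mp h)
          omega
  funext k
  exact key N k (by omega)

end main

/-- Every `n : ℕ` has a unique greedy representation in the cutting-time base, and this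
representation is admissible: `e_i = 1` implies `e_j = 0` for all `Q(i+1) ≤ j < i`. -/
theorem greedy_rep_exists_unique_and_admissible (S Q : ℕ → ℕ)
    (hS0 : S 0 = 1) (hmono : StrictMono S)
    (hQ : ∀ k, 1 ≤ k → Q k < k) (hrec : ∀ k, 1 ≤ k → S k = S (k - 1) + S (Q k)) :
    ∀ n : ℕ, (∃! e : ℕ → ℕ, IsGreedyRep S n e) ∧
      (∀ e : ℕ → ℕ, IsGreedyRep S n e →
        ∀ i j, e i = 1 → Q (i + 1) ≤ j → j < i → e j = 0) := by
  intro n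
  have hrep := greedy_isRep hS0 hmono hQ hrec n
  constructor
  · exact ⟨_, hrep, fun f hf => greedy_unique hf hrep⟩
  · intro e herep i j hi hQj hji
    have heq : e = fun i => if i ∈ greedySet S n then 1 else 0 := greedy_unique herep hrep
    rw [heq] at hi ⊢
    obtain ⟨_, _, hc⟩ := greedySet_spec hS0 hmono hQ hrec n
    have hiG : i ∈ greedySet S n := by
      by_contra h; simp [h] at hi
    by_cases hjG : j ∈ greedySet S n
    · have := hc i hiG j hjG hji; omega
    · simp [hjG]
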